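/- arXiv:1302.4015 — 3 statements merged into one kernel-verified Lean document; each statement's English description precedes it below -/
import Mathlib

section
/- Let V be a finite-dimensional real vector space with a fixed rational structure (i.e. V = V_Q ⊗_Q ℝ for a Q-vector space V_Q). Let P ∈ V and let W be the smallest rational affine subspace of V containing P (the intersection of all affine subspaces spanned by elements of V_Q that contain P). If the linear span U of W strictly contains W (i.e. W is not a linear subspace), then P can be written as P = Σ_{i=1}^n r_i P_i where P_i ∈ W ∩ V_Q, the r_i are positive reals, and n = dim W + 1. Moreover, the coefficients r_1, …, r_n are linearly independent over Q. -/
lemma ratsmul_mem' {V : Type*} [AddCommGroup V] [Module ℝ V] [Module ℚ V]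
    (VQ : Submodule ℚ V) (q : ℚ) {v : V} (hv : v ∈ VQ) : (q : ℝ) • v ∈ VQ := by
  have : (q : ℝ) • v = q • v := by
    rw [ratCast_smul_eq ℝ ℚ q v, Rat.cast_id]
  rw [this]
  exact VQ.smul_mem q hv

lemma indep_aux' {V : Type*} [AddCommGroup V] [Module ℝ V] [Module ℚ V]
    (VQ : Submodule ℚ V) (P : V) (W : AffineSubspace ℝ V)
    (hWmin : ∀ A : AffineSubspace ℝ V, P ∈ A → (∃ S ⊆ (VQ : Set V), A = affineSpan ℝ S) →
      W ≤ A)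
    {n : ℕ} {Q : Fin n → V} (hai : AffineIndependent ℝ Q)
    (hQW : ∀ i, Q i ∈ W) (hQVQ : ∀ i, Q i ∈ VQ)
    {w : Fin n → ℝ} (hsum : ∑ i, w i = 1) (hP : P = ∑ i, w i • Q i) :
    LinearIndependent ℚ w := by
  classical
  rw [Fintype.linearIndependent_iff]
  intro g hg
  have hg' : ∑ i, (g i : ℝ) * w i = 0 := by
    simpa [Rat.smul_def] using hg
  by_cases hcase : ∀ i j : Fin n, g i = g j
  · intro i
    have h0 : ∑ j, (g i : ℝ) * w j = 0 := by
      rw [← hg']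
      exact Finset.sum_congr rfl fun j _ => by rw [hcase i j]
    rw [← Finset.mul_sum, hsum, mul_one] at h0
    exact_mod_cast h0
  · push_neg at hcase
    obtain ⟨j, k, hjk⟩ := hcase
    have hjkR : (g j : ℝ) - (g k : ℝ) ≠ 0 := by
      rw [sub_ne_zero]
      exact_mod_cast hjk
    set c : Fin n → ℚ := fun i => g i / (g j - g k) with hc
    have hcR : ∀ i, (c i : ℝ) * ((g j : ℝ) - (g k : ℝ)) = (g i : ℝ) := by
      intro i
      have hq : (g j - g k : ℚ) ≠ 0 := sub_ne_zero.mpr hjk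
      rw [hc]
      push_cast
      field_simp
    set X : Fin n → V := fun i => Q i + (c i : ℝ) • (Q k - Q j) with hX
    have hexp : ∀ u : Fin n → ℝ,
        ∑ i, u i • X i = ∑ i, u i • Q i + (∑ i, u i * (c i : ℝ)) • (Q k - Q j) := by
      intro u
      simp only [hX, smul_add, Finset.sum_add_distrib, smul_smul, Finset.sum_smul]
    have hwc : ∑ i, w i * (c i : ℝ) = 0 := by
      have h1 : (∑ i, w i * (c i : ℝ)) * ((g j : ℝ) - (g k : ℝ)) = ∑ i, (g i : ℝ) * w i := by
        rw [Finset.sum_mul]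
        exact Finset.sum_congr rfl fun i _ => by rw [mul_assoc, hcR i]; ring
      rw [hg'] at h1
      exact (mul_eq_zero.mp h1).resolve_right hjkR
    have hPX : P = ∑ i, w i • X i := by
      rw [hexp, hwc, zero_smul, add_zero, hP]
    have hXVQ : ∀ i, X i ∈ VQ := fun i =>
      VQ.add_mem (hQVQ i) (ratsmul_mem' VQ (c i) (VQ.sub_mem (hQVQ k) (hQVQ j)))
    have hXW : ∀ i, X i ∈ W := by
      intro i
      have h2 := W.smul_vsub_vadd_mem ((c i : ℝ)) (hQW k) (hQW j) (hQW i)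
      simpa [hX, vsub_eq_sub, vadd_eq_add, add_comm] using h2
    have hPA : P ∈ affineSpan ℝ (Set.range X) := by
      rw [hPX, ← Finset.univ.affineCombination_eq_linear_combination X w hsum]
      exact affineCombination_mem_affineSpan hsum X
    have hWA : W ≤ affineSpan ℝ (Set.range X) :=
      hWmin _ hPA ⟨Set.range X, Set.range_subset_iff.mpr hXVQ, rfl⟩
    intro i0
    obtain ⟨u, husum, huX⟩ :=
      eq_affineCombination_of_mem_affineSpan_of_fintype (hWA (hQW i0))
    have huX' : Q i0 = ∑ i, u i • X i := by
      rw [huX, Finset.univ.affineCombination_eq_linear_combination X u husum]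
    set γ : ℝ := ∑ i, u i * (c i : ℝ) with hγdef
    set v : Fin n → ℝ :=
      fun i => u i + (if i = k then γ else 0) - (if i = j then γ else 0) with hv
    have hjkne : j ≠ k := fun h => hjk (by rw [h])
    have hvsum : ∑ i, v i = 1 := by
      simp [hv, Finset.sum_add_distrib, Finset.sum_sub_distrib, husum,
        Finset.sum_ite_eq']
    have hδsum : ∑ i, (if i = i0 then (1:ℝ) else 0) = 1 := by
      simp [Finset.sum_ite_eq']
    have hvQ : ∑ i, v i • Q i = ∑ i, (if i = i0 then (1:ℝ) else 0) • Q i := by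
      have h1 : ∑ i, (if i = i0 then (1:ℝ) else 0) • Q i = Q i0 := by
        simp [ite_smul, Finset.sum_ite_eq']
      rw [h1, huX', hexp u]
      simp only [hv, sub_smul, add_smul, ite_smul, zero_smul, one_smul,
        Finset.sum_add_distrib, Finset.sum_sub_distrib, Finset.sum_ite_eq',
        Finset.mem_univ, if_true, smul_sub]
      abel
    have hveq : ∀ i, v i = (if i = i0 then (1:ℝ) else 0) := by
      intro i
      exact hai.eq_of_sum_eq_sum (by rw [hvsum, hδsum]) hvQ i (Finset.mem_univ i)
    have hγu : γ * ((g j : ℝ) - (g k : ℝ)) = ∑ i, (g i : ℝ) * u i := by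
      rw [hγdef, Finset.sum_mul]
      exact Finset.sum_congr rfl fun i _ => by rw [mul_assoc, hcR i]; ring
    have hL : ∑ i, (g i : ℝ) * v i = 0 := by
      simp only [hv, mul_add, mul_sub, Finset.sum_add_distrib, Finset.sum_sub_distrib,
        mul_ite, mul_zero, Finset.sum_ite_eq', Finset.mem_univ, if_true]
      linear_combination -hγu
    have hR : ∑ i, (g i : ℝ) * v i = (g i0 : ℝ) := by
      simp [hveq, mul_ite, Finset.sum_ite_eq']
    rw [hL] at hR
    exact_mod_cast hR.symm
lemma sum_smul_mem_affine' {V : Type*} [AddCommGroup V] [Module ℝ V]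
    (W : AffineSubspace ℝ V) {n : ℕ} {p : Fin n → V} {w : Fin n → ℝ}
    (hp : ∀ i, p i ∈ W) (hw : ∑ i, w i = 1) {P : V} (hP : P ∈ W) :
    ∑ i, w i • p i ∈ W := by
  have h : ∑ i, w i • p i = (∑ i, w i • (p i - P)) + P := by
    simp [smul_sub, Finset.sum_sub_distrib, ← Finset.sum_smul, hw]
  rw [h]
  have hd : (∑ i, w i • (p i - P)) ∈ W.direction :=
    Submodule.sum_mem _ fun i _ => Submodule.smul_mem _ _
      (by simpa [vsub_eq_sub] using AffineSubspace.vsub_mem_direction (hp i) hP)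
  simpa [vadd_eq_add] using AffineSubspace.vadd_mem_of_mem_direction hd hP

/-- rational structure, minimal rational affine subspace `W` containing `P`.
If the linear span of `W` strictly contains `W`, then `P = ∑ rᵢ Pᵢ` with `Pᵢ ∈ W ∩ V_ℚ`,
`rᵢ > 0`, `n = dim W + 1`, and the `rᵢ` linearly independent over `ℚ`. -/
theorem stmt0 {V : Type*} [AddCommGroup V] [Module ℝ V] [Module ℚ V]
    [IsScalarTower ℚ ℝ V] [FiniteDimensional ℝ V]
    (VQ : Submodule ℚ V)
    -- rational structure: VQ spans V over ℝ and ℚ-independent rational vectors are ℝ-independent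
    (hspan : Submodule.span ℝ (VQ : Set V) = ⊤)
    (hli : ∀ {ι : Type} (v : ι → V), (∀ i, v i ∈ VQ) → LinearIndependent ℚ v →
      LinearIndependent ℝ v)
    (P : V) (W : AffineSubspace ℝ V)
    (hPW : P ∈ W)
    (hWrat : ∃ S ⊆ (VQ : Set V), W = affineSpan ℝ S)
    (hWmin : ∀ A : AffineSubspace ℝ V, P ∈ A → (∃ S ⊆ (VQ : Set V), A = affineSpan ℝ S) →
      W ≤ A)
    -- the linear span of W strictly contains W, i.e. W is not a linear subspace
    (hWU : (↑(Submodule.span ℝ (W : Set V)) : Set V) ≠ (W : Set V)) :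
    ∃ (n : ℕ) (Pi : Fin n → V) (r : Fin n → ℝ),
      n = Module.finrank ℝ W.direction + 1 ∧
      (∀ i, Pi i ∈ W ∧ Pi i ∈ VQ) ∧
      (∀ i, 0 < r i) ∧
      P = ∑ i, r i • Pi i ∧
      LinearIndependent ℚ r := by
  classical
  obtain ⟨S, hSVQ, hWS⟩ := hWrat
  set R : Set V := (W : Set V) ∩ (VQ : Set V) with hR
  have hSR : S ⊆ R := fun x hx =>
    ⟨by rw [hWS]; exact subset_affineSpan ℝ S hx, hSVQ hx⟩
  have hWR : affineSpan ℝ R = W := by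
    refine le_antisymm ?_ ?_
    · rw [affineSpan_le]; exact Set.inter_subset_left
    · rw [hWS]; exact affineSpan_mono ℝ hSR
  obtain ⟨t, htR, htspan, htai⟩ := exists_affineIndependent ℝ V R
  have htW : affineSpan ℝ t = W := htspan.trans hWR
  haveI : Fintype t := (finite_set_of_fin_dim_affineIndependent ℝ htai).fintype
  set m := Fintype.card t with hm
  have htne : t.Nonempty := by
    rw [← affineSpan_nonempty (k := ℝ), htW]
    exact ⟨P, hPW⟩
  haveI : Nonempty t := htne.to_subtype
  have hm1 : 1 ≤ m := Fintype.card_pos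
  haveI : Nonempty (Fin m) := ⟨⟨0, hm1⟩⟩
  set e := (Fintype.equivFin t).symm with he
  set Q0 : Fin m → V := fun i => ((e i : V)) with hQ0
  have hQ0ai : AffineIndependent ℝ Q0 := (affineIndependent_equiv e).mpr htai
  have hrange : Set.range Q0 = t := by
    have h1 : Set.range Q0 = Set.range ((↑) : t → V) := by
      rw [hQ0]
      exact e.surjective.range_comp _
    rw [h1, Subtype.range_coe]
  have hQ0W : ∀ i, Q0 i ∈ W := fun i => (htR (e i).2).1
  have hQ0VQ : ∀ i, Q0 i ∈ VQ := fun i => (htR (e i).2).2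
  have hd : Module.finrank ℝ W.direction + 1 = m := by
    have h1 : Fintype.card (Fin m) = (m - 1) + 1 := by
      rw [Fintype.card_fin]; omega
    have h2 := hQ0ai.finrank_vectorSpan h1
    rw [hrange] at h2
    have h3 : vectorSpan ℝ t = W.direction := by rw [← direction_affineSpan, htW]
    rw [h3] at h2
    omega
  have hPspan : P ∈ affineSpan ℝ (Set.range Q0) := by rw [hrange, htW]; exact hPW
  obtain ⟨w0, hw0sum, hw0⟩ := eq_affineCombination_of_mem_affineSpan_of_fintype hPspan
  have hP0 : P = ∑ i, w0 i • Q0 i := by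
    rw [hw0, Finset.univ.affineCombination_eq_linear_combination Q0 w0 hw0sum]
  -- dilation about the barycenter
  have hmR : (0:ℝ) < m := by exact_mod_cast hm1
  have hm0 : (m:ℝ) ≠ 0 := ne_of_gt hmR
  obtain ⟨N, hN⟩ := exists_nat_gt
    (max 1 (1 + m * Finset.univ.sup' Finset.univ_nonempty (fun i => -w0 i)))
  have hN1 : (1:ℝ) < N := lt_of_le_of_lt (le_max_left _ _) hN
  have hNpos : (0:ℝ) < N := lt_trans one_pos hN1
  have hN0 : (N:ℝ) ≠ 0 := ne_of_gt hNpos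
  have hNi : ∀ i, 0 < (m:ℝ) * w0 i + N - 1 := by
    intro i
    have h4 : -w0 i ≤ Finset.univ.sup' Finset.univ_nonempty (fun i => -w0 i) :=
      Finset.le_sup' (fun i => -w0 i) (Finset.mem_univ i)
    have h5 : (m:ℝ) * (-w0 i) ≤ m * Finset.univ.sup' Finset.univ_nonempty (fun i => -w0 i) :=
      mul_le_mul_of_nonneg_left h4 hmR.le
    have h6 : 1 + (m:ℝ) * Finset.univ.sup' Finset.univ_nonempty (fun i => -w0 i) < N :=
      lt_of_le_of_lt (le_max_right _ _) hN
    nlinarith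
  set B : V := (m:ℝ)⁻¹ • ∑ i, Q0 i with hB
  have hconst : ∑ _i : Fin m, (m:ℝ)⁻¹ = 1 := by
    rw [Finset.sum_const, Finset.card_univ, Fintype.card_fin, nsmul_eq_mul,
      mul_inv_cancel₀ hm0]
  have hBW : B ∈ W := by
    have h7 : B = ∑ i, (fun _ : Fin m => (m:ℝ)⁻¹) i • Q0 i := by
      rw [hB, Finset.smul_sum]
    rw [h7]
    exact sum_smul_mem_affine' W hQ0W hconst hPW
  have hBVQ : B ∈ VQ := by
    rw [hB]
    have hsumVQ : (∑ i : Fin m, Q0 i) ∈ VQ := Submodule.sum_mem VQ fun i _ => hQ0VQ i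
    have h8 := ratsmul_mem' VQ ((m:ℚ)⁻¹) hsumVQ
    simpa only [Rat.cast_inv, Rat.cast_natCast] using h8
  have hmB : ∑ i, Q0 i = (m:ℝ) • B := by
    rw [hB, smul_inv_smul₀ hm0]
  set Qf : Fin m → V := fun i => (N:ℝ) • Q0 i + (1 - (N:ℝ)) • B with hQf
  set wf : Fin m → ℝ := fun i => w0 i / N + ((N:ℝ) - 1)/(N * m) with hwf
  have hwfpos : ∀ i, 0 < wf i := by
    intro i
    have h9 : wf i = ((m:ℝ) * w0 i + N - 1)/(N*m) := by
      rw [hwf]; field_simp; ring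
    rw [h9]
    exact div_pos (hNi i) (mul_pos hNpos hmR)
  have hwfsum : ∑ i, wf i = 1 := by
    rw [hwf]
    rw [Finset.sum_add_distrib, ← Finset.sum_div, hw0sum, Finset.sum_const,
      Finset.card_univ, Fintype.card_fin, nsmul_eq_mul]
    field_simp
    ring
  have hQfW : ∀ i, Qf i ∈ W := by
    intro i
    have h10 := W.smul_vsub_vadd_mem ((N:ℝ)) (hQ0W i) hBW hBW
    have h11 : (N:ℝ) • (Q0 i -ᵥ B) +ᵥ B = Qf i := by
      rw [hQf, vsub_eq_sub, vadd_eq_add]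
      module
    rwa [h11] at h10
  have hQfVQ : ∀ i, Qf i ∈ VQ := by
    intro i
    rw [hQf]
    have h12 : ((N:ℚ):ℝ) = (N:ℝ) := by push_cast; ring
    have h13 : ((1 - (N:ℚ) : ℚ):ℝ) = 1 - (N:ℝ) := by push_cast; ring
    exact VQ.add_mem (h12 ▸ ratsmul_mem' VQ (N:ℚ) (hQ0VQ i))
      (h13 ▸ ratsmul_mem' VQ (1-(N:ℚ)) hBVQ)
  have hQfai : AffineIndependent ℝ Qf := by
    rw [affineIndependent_iff]
    intro s w hw hcomb
    have h14 : ∑ i ∈ s, w i • Qf i =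
        (N:ℝ) • (∑ i ∈ s, w i • Q0 i) + (∑ i ∈ s, w i) • ((1-(N:ℝ)) • B) := by
      rw [Finset.smul_sum, Finset.sum_smul, ← Finset.sum_add_distrib]
      refine Finset.sum_congr rfl fun i _ => ?_
      rw [hQf]
      simp only [smul_add, smul_smul]
      rw [mul_comm]
    rw [hcomb, hw, zero_smul, add_zero] at h14
    have h15 : ∑ i ∈ s, w i • Q0 i = 0 := by
      rcases smul_eq_zero.mp h14.symm with h | h
      · exact absurd h hN0
      · exact h
    exact affineIndependent_iff.mp hQ0ai s w hw h15
  have h13 : ∀ i, wf i * (N:ℝ) = w0 i + ((N:ℝ)-1)/m := by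
    intro i; rw [hwf]; field_simp
  have hPf : P = ∑ i, wf i • Qf i := by
    have c1 : ∑ i, wf i • Qf i =
        ∑ i, ((wf i * N) • Q0 i + wf i • ((1-(N:ℝ)) • B)) := by
      refine Finset.sum_congr rfl fun i _ => ?_
      rw [hQf]; simp only [smul_add, smul_smul]
    have c2 : ∑ i, ((wf i * N) • Q0 i + wf i • ((1-(N:ℝ)) • B)) =
        ∑ i, (w0 i + ((N:ℝ)-1)/m) • Q0 i + (1-(N:ℝ)) • B := by
      rw [Finset.sum_add_distrib, ← Finset.sum_smul, hwfsum, one_smul]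
      congr 1
      exact Finset.sum_congr rfl fun i _ => by rw [h13]
    have c3 : ∑ i, (w0 i + ((N:ℝ)-1)/m) • Q0 i =
        ∑ i, w0 i • Q0 i + ((N:ℝ)-1) • B := by
      have : ∀ i, (w0 i + ((N:ℝ)-1)/m) • Q0 i
          = w0 i • Q0 i + (((N:ℝ)-1)/m) • Q0 i := fun i => add_smul _ _ _
      rw [Finset.sum_congr rfl fun i _ => this i, Finset.sum_add_distrib]
      congr 1
      rw [← Finset.smul_sum, hmB, smul_smul, div_mul_cancel₀ _ hm0]
    rw [c1, c2, c3, ← hP0]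
    have : ((N:ℝ)-1) • B + (1-(N:ℝ)) • B = 0 := by module
    rw [add_assoc, this, add_zero]
  refine ⟨m, Qf, wf, hd.symm, fun i => ⟨hQfW i, hQfVQ i⟩, hwfpos, hPf, ?_⟩
  exact indep_aux' VQ P W hWmin hQfai hQfW hQfVQ hwfsum hPf
end

section
/- Let V be a finite-dimensional real vector space with rational structure V_Q and let P ∈ V with smallest rational affine subspace W containing P. For every δ > 0 and every norm ‖·‖ on V, one can choose rational points P_1, …, P_n ∈ W ∩ V_Q and positive reals r_1, …, r_n, linearly independent over Q, with P = Σ r_i P_i and ‖P − P_i‖ < δ for every i. -/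
lemma qsmul_eq {V : Type*} [AddCommGroup V] [Module ℝ V] [Module ℚ V] [IsScalarTower ℚ ℝ V]
    (q : ℚ) (x : V) : (q : ℝ) • x = q • x := by
  rw [← eq_ratCast (algebraMap ℚ ℝ) q, algebraMap_smul]

/-- Key lemma: minimality of `W` forces `(1, t₁, …, t_d)` to be `ℚ`-linearly independent. -/
lemma auxA {V : Type*} [AddCommGroup V] [Module ℝ V] [Module ℚ V] [IsScalarTower ℚ ℝ V]
    (VQ : Submodule ℚ V)
    (P : V) (W : AffineSubspace ℝ V)
    (hWmin : ∀ A : AffineSubspace ℝ V, P ∈ A → (∃ S ⊆ (VQ : Set V), A = affineSpan ℝ S) →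
      W ≤ A)
    (Q0 : V) (hQ0W : Q0 ∈ W) (hQ0VQ : Q0 ∈ VQ)
    {d : ℕ} (v : Fin d → V) (hvVQ : ∀ j, v j ∈ VQ) (hvdir : ∀ j, v j ∈ W.direction)
    (hvli : LinearIndependent ℝ v)
    (t : Fin d → ℝ) (hPt : P = Q0 + ∑ j, t j • v j)
    (a : Fin d → ℚ) (a0 : ℚ) (hrel : ∑ j, (a j : ℝ) * t j = (a0 : ℝ)) : a = 0 := by
  by_contra ha
  obtain ⟨j0, hj0⟩ : ∃ j, a j ≠ 0 := Function.ne_iff.mp ha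
  classical
  -- rational points of the rational hyperplane through P
  set K : Set V := {x | ∃ s : Fin d → ℚ, (∑ j, a j * s j = a0) ∧ ∑ j, (s j : ℝ) • v j = x} with hK
  set S' : Set V := (fun x => Q0 + x) '' K with hS'
  have hS'VQ : S' ⊆ (VQ : Set V) := by
    rintro _ ⟨x, ⟨s, _, rfl⟩, rfl⟩
    exact VQ.add_mem hQ0VQ (Submodule.sum_mem _ fun j _ => by
      rw [qsmul_eq]; exact VQ.smul_mem _ (hvVQ j))
  set A := affineSpan ℝ S' with hA
  -- the special point
  set s0 : Fin d → ℚ := fun j => if j = j0 then a0 / a j0 else 0 with hs0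
  have hs0rel : ∑ j, a j * s0 j = a0 := by
    rw [Finset.sum_eq_single j0]
    · simp only [hs0, if_pos rfl]; field_simp
    · intro b _ hb; simp [hs0, hb]
    · simp
  set w : V := ∑ j, (s0 j : ℝ) • v j with hw
  have hwS' : Q0 + w ∈ S' := ⟨w, ⟨s0, hs0rel, rfl⟩, rfl⟩
  -- rational kernel vectors
  set k : Fin d → V := fun j => v j - ((a j / a j0 : ℚ) : ℝ) • v j0 with hk
  have hkdir : ∀ j, k j ∈ A.direction := by
    intro j
    have hmem : Q0 + (w + k j) ∈ S' := by
      set sδ : Fin d → ℚ := fun i => s0 i + ((if i = j then (1:ℚ) else 0) - (a j / a j0) * (if i = j0 then (1:ℚ) else 0)) with hsδ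
      refine ⟨w + k j, ⟨sδ, ?_, ?_⟩, rfl⟩
      · have h1 : ∑ i, a i * ((if i = j then (1:ℚ) else 0) - (a j / a j0) * (if i = j0 then (1:ℚ) else 0)) = 0 := by
          rw [Finset.sum_congr rfl (fun i _ => mul_sub (a i) _ _), Finset.sum_sub_distrib]
          have e1 : ∑ i, a i * (if i = j then (1:ℚ) else 0) = a j := by
            rw [Finset.sum_eq_single j]
            · simp
            · intro b _ hb; simp [hb]
            · simp
          have e2 : ∑ i, a i * (a j / a j0 * (if i = j0 then (1:ℚ) else 0)) = a j := by
            rw [Finset.sum_eq_single j0]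
            · rw [if_pos rfl, mul_one, mul_comm, div_mul_cancel₀ _ hj0]
            · intro b _ hb; simp [hb]
            · simp
          rw [e1, e2, sub_self]
        simp only [hsδ]
        rw [Finset.sum_congr rfl (fun i _ => mul_add (a i) _ _), Finset.sum_add_distrib, hs0rel, h1, add_zero]
      · have h2 : ∀ i, ((sδ i : ℚ) : ℝ) • v i
            = (s0 i : ℝ) • v i + (((if i = j then (1:ℚ) else 0) : ℝ) • v i
              - ((a j / a j0 : ℚ) : ℝ) • (((if i = j0 then (1:ℚ) else 0) : ℝ) • v i)) := by
          intro i
          simp only [hsδ]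
          push_cast
          rw [smul_smul, ← sub_smul, ← add_smul]
          congr 1
          simp [apply_ite (fun q : ℚ => (q : ℝ))]
        rw [Finset.sum_congr rfl (fun i _ => h2 i), Finset.sum_add_distrib, ← hw]
        congr 1
        rw [Finset.sum_sub_distrib, ← Finset.smul_sum, hk]
        have e3 : ∀ (j' : Fin d), ∑ i, (((if i = j' then (1:ℚ) else 0) : ℝ)) • v i = v j' := by
          intro j'
          rw [Finset.sum_eq_single j']
          · simp
          · intro b _ hb; simp [hb]
          · simp
        rw [e3, e3]
    have h1 : Q0 + (w + k j) ∈ A := subset_affineSpan ℝ S' hmem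
    have h2 : Q0 + w ∈ A := subset_affineSpan ℝ S' hwS'
    have := AffineSubspace.vsub_mem_direction h1 h2
    simpa [vsub_eq_sub] using this
  -- w is a single multiple of v j0
  have hw' : w = ((a0 / a j0 : ℚ) : ℝ) • v j0 := by
    rw [hw, Finset.sum_eq_single j0]
    · simp [hs0]
    · intro b _ hb; simp [hs0, hb]
    · simp
  -- scalar identity from hrel
  have hsc : ∑ i ∈ Finset.univ.erase j0, t i * ((a i / a j0 : ℚ) : ℝ)
      = (a0 : ℝ) / (a j0 : ℝ) - t j0 := by
    have hja : ((a j0 : ℝ)) ≠ 0 := by exact_mod_cast hj0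
    have h1 : ∑ i ∈ Finset.univ.erase j0, (a i : ℝ) * t i = (a0 : ℝ) - (a j0 : ℝ) * t j0 := by
      have := Finset.sum_erase_add Finset.univ (fun i => (a i : ℝ) * t i) (Finset.mem_univ j0)
      rw [hrel] at this
      linarith
    rw [Finset.sum_congr rfl (fun i _ => by push_cast; field_simp :
      ∀ i ∈ Finset.univ.erase j0, t i * ((a i / a j0 : ℚ) : ℝ) = ((a i : ℝ) * t i) / (a j0 : ℝ))]
    rw [← Finset.sum_div, h1]
    field_simp
  -- the vector identity
  have hu : ∑ i ∈ Finset.univ.erase j0, t i • k i = (∑ j, t j • v j) - w := by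
    simp only [hk, smul_sub, smul_smul]
    rw [Finset.sum_sub_distrib, ← Finset.sum_smul, hsc, hw',
      ← Finset.sum_erase_add Finset.univ _ (Finset.mem_univ j0), sub_smul]
    push_cast
    abel
  have hPA : P ∈ A := by
    have hdirm : (∑ i ∈ Finset.univ.erase j0, t i • k i) ∈ A.direction :=
      Submodule.sum_mem _ (fun i _ => Submodule.smul_mem _ _ (hkdir i))
    have hPeq : P = (∑ i ∈ Finset.univ.erase j0, t i • k i) +ᵥ (Q0 + w) := by
      rw [vadd_eq_add, hu, hPt]; abel
    rw [hPeq]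
    exact AffineSubspace.vadd_mem_of_mem_direction hdirm (subset_affineSpan ℝ S' hwS')
  have hWA : W ≤ A := hWmin A hPA ⟨S', hS'VQ, hA⟩
  -- the contradiction point
  have hwdir : w + v j0 ∈ W.direction := by
    refine Submodule.add_mem _ (Submodule.sum_mem _ fun i _ => Submodule.smul_mem _ _ (hvdir i)) (hvdir j0)
  have hQW : (w + v j0) + Q0 ∈ W := AffineSubspace.vadd_mem_of_mem_direction hwdir hQ0W
  have hQA : (w + v j0) + Q0 ∈ A := hWA hQW
  have hv0dir : v j0 ∈ A.direction := by
    have := AffineSubspace.vsub_mem_direction hQA (subset_affineSpan ℝ S' hwS')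
    have heq : ((w + v j0) + Q0) -ᵥ (Q0 + w) = v j0 := by rw [vsub_eq_sub]; abel
    rwa [heq] at this
  -- A.direction is contained in the kernel image
  set L : (Fin d → ℝ) →ₗ[ℝ] V := Fintype.linearCombination ℝ v with hL
  set ℓ : (Fin d → ℝ) →ₗ[ℝ] ℝ := Fintype.linearCombination ℝ (fun j => (a j : ℝ)) with hℓ
  have hAdir : A.direction ≤ Submodule.map L (LinearMap.ker ℓ) := by
    rw [hA, direction_affineSpan, vectorSpan_def]
    rw [Submodule.span_le]
    rintro _ ⟨_, ⟨x, ⟨s, hs1, rfl⟩, rfl⟩, _, ⟨y, ⟨s', hs'1, rfl⟩, rfl⟩, rfl⟩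
    refine ⟨fun j => (s j : ℝ) - (s' j : ℝ), ?_, ?_⟩
    · simp only [SetLike.mem_coe, LinearMap.mem_ker, hℓ, Fintype.linearCombination_apply,
        smul_eq_mul]
      have c1 : ((∑ j, a j * s j : ℚ) : ℝ) = (a0 : ℝ) := by exact_mod_cast hs1
      have c2 : ((∑ j, a j * s' j : ℚ) : ℝ) = (a0 : ℝ) := by exact_mod_cast hs'1
      push_cast at c1 c2
      rw [Finset.sum_congr rfl (fun j _ => by ring :
        ∀ j ∈ Finset.univ, ((s j : ℝ) - (s' j : ℝ)) * (a j : ℝ)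
          = (a j : ℝ) * (s j : ℝ) - (a j : ℝ) * (s' j : ℝ)),
        Finset.sum_sub_distrib, c1, c2, sub_self]
    · show ∑ i, ((s i : ℝ) - (s' i : ℝ)) • v i
        = (Q0 + ∑ j, (s j : ℝ) • v j) -ᵥ (Q0 + ∑ j, (s' j : ℝ) • v j)
      rw [vsub_eq_sub]
      rw [Finset.sum_congr rfl (fun j _ => sub_smul _ _ _), Finset.sum_sub_distrib]
      abel
  have hv0 : v j0 ∈ Submodule.map L (LinearMap.ker ℓ) := hAdir hv0dir
  obtain ⟨c, hc1, hc2⟩ := hv0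
  simp only [SetLike.mem_coe, LinearMap.mem_ker, hℓ, Fintype.linearCombination_apply] at hc1
  rw [hL, Fintype.linearCombination_apply] at hc2
  -- uniqueness of coefficients
  have huniq : ∀ j, c j - (if j = j0 then (1:ℝ) else 0) = 0 := by
    refine Fintype.linearIndependent_iff.mp hvli _ ?_
    rw [Finset.sum_congr rfl (fun j _ => sub_smul _ _ _), Finset.sum_sub_distrib, hc2]
    rw [Finset.sum_eq_single j0]
    · simp
    · intro b _ hb; simp [hb]
    · simp
  have hcval : ∀ j, c j = if j = j0 then (1:ℝ) else 0 := by
    intro j; have := huniq j; linarith [huniq j]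
  rw [Finset.sum_congr rfl (fun j _ => by rw [hcval j])] at hc1
  rw [Finset.sum_eq_single j0] at hc1
  · simp at hc1; exact hj0 (by exact_mod_cast hc1)
  · intro b _ hb; simp [hb]
  · simp

set_option maxHeartbeats 1000000 in
/-- the rational decomposition `P = ∑ rᵢ Pᵢ` with `Pᵢ ∈ W ∩ V_ℚ` and the `rᵢ > 0`
ℚ-linearly independent can be chosen with `‖P − Pᵢ‖ < δ` for every `i`. -/
theorem stmt2 {V : Type*} [NormedAddCommGroup V] [NormedSpace ℝ V] [Module ℚ V]
    [IsScalarTower ℚ ℝ V] [FiniteDimensional ℝ V]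
    (VQ : Submodule ℚ V)
    (hspan : Submodule.span ℝ (VQ : Set V) = ⊤)
    (hli : ∀ {ι : Type} (v : ι → V), (∀ i, v i ∈ VQ) → LinearIndependent ℚ v →
      LinearIndependent ℝ v)
    (P : V) (W : AffineSubspace ℝ V)
    (hPW : P ∈ W)
    (hWrat : ∃ S ⊆ (VQ : Set V), W = affineSpan ℝ S)
    (hWmin : ∀ A : AffineSubspace ℝ V, P ∈ A → (∃ S ⊆ (VQ : Set V), A = affineSpan ℝ S) →
      W ≤ A)
    (δ : ℝ) (hδ : 0 < δ) :
    ∃ (n : ℕ) (Pi : Fin n → V) (r : Fin n → ℝ),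
      (∀ i, Pi i ∈ W ∧ Pi i ∈ VQ) ∧
      (∀ i, 0 < r i) ∧
      LinearIndependent ℚ r ∧
      P = ∑ i, r i • Pi i ∧
      (∀ i, ‖P - Pi i‖ < δ) := by
  classical
  obtain ⟨S, hSVQ, hW⟩ := hWrat
  have hSne : S.Nonempty := by
    rcases S.eq_empty_or_nonempty with h | h
    · exfalso
      rw [hW, h, AffineSubspace.span_empty] at hPW
      exact AffineSubspace.notMem_bot ℝ V P hPW
    · exact h
  obtain ⟨Q0, hQ0S⟩ := hSne
  have hQ0W : Q0 ∈ W := by rw [hW]; exact subset_affineSpan ℝ S hQ0S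
  have hQ0VQ : Q0 ∈ VQ := hSVQ hQ0S
  have hdir : W.direction = Submodule.span ℝ ((fun x => x - Q0) '' S) := by
    rw [hW, direction_affineSpan, vectorSpan_eq_span_vsub_set_right ℝ hQ0S]
    simp [vsub_eq_sub]
  obtain ⟨b, hbD, hbspan, hbli⟩ := exists_linearIndependent ℝ ((fun x => x - Q0) '' S)
  have hbfin : b.Finite := hbli.setFinite
  haveI := hbfin.fintype
  set d := Fintype.card b with hd
  set e := (Fintype.equivFin b).symm with he
  set v : Fin d → V := fun j => ((e j : V)) with hv
  have hvli : LinearIndependent ℝ v := hbli.comp e e.injective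
  have hvrange : Set.range v = b := by
    rw [hv]
    ext x
    constructor
    · rintro ⟨j, rfl⟩; exact (e j).2
    · intro hx; exact ⟨e.symm ⟨x, hx⟩, by simp⟩
  have hvspan : Submodule.span ℝ (Set.range v) = W.direction := by
    rw [hvrange, hbspan, hdir]
  have hvVQ : ∀ j, v j ∈ VQ := by
    intro j
    have : (v j : V) ∈ b := by rw [← hvrange]; exact ⟨j, rfl⟩
    obtain ⟨x, hxS, hxe⟩ := hbD this
    rw [← hxe]
    exact VQ.sub_mem (hSVQ hxS) hQ0VQ
  have hvdir : ∀ j, v j ∈ W.direction := by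
    intro j
    rw [← hvspan]
    exact Submodule.subset_span ⟨j, rfl⟩
  have hPU : P - Q0 ∈ Submodule.span ℝ (Set.range v) := by
    rw [hvspan]
    have := AffineSubspace.vsub_mem_direction hPW hQ0W
    rwa [vsub_eq_sub] at this
  obtain ⟨t, ht⟩ := (Submodule.mem_span_range_iff_exists_fun ℝ).mp hPU
  have hPt : P = Q0 + ∑ j, t j • v j := by rw [ht]; abel
  have claimA : ∀ (a : Fin d → ℚ) (a0 : ℚ), ∑ j, (a j : ℝ) * t j = (a0 : ℝ) → a = 0 :=
    fun a a0 h => auxA VQ P W hWmin Q0 hQ0W hQ0VQ v hvVQ hvdir hvli t hPt a a0 h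
  have hirr : ∀ j, ∀ q : ℚ, t j ≠ (q : ℝ) := by
    intro j q hq
    have h1 : ∑ j', ((if j' = j then (1:ℚ) else 0 : ℚ) : ℝ) * t j' = (q : ℝ) := by
      rw [Finset.sum_eq_single j]
      · simp [hq]
      · intro b _ hb; simp [hb]
      · simp
    have := congrFun (claimA _ q h1) j
    simp at this
  rcases Nat.eq_zero_or_pos d with hd0 | hdpos
  · -- degenerate case : P itself is rational
    haveI : IsEmpty (Fin d) := by rw [hd0]; infer_instance
    have hPQ0 : P = Q0 := by
      rw [hPt, Finset.univ_eq_empty, Finset.sum_empty, add_zero]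
    refine ⟨1, fun _ => P, fun _ => 1, fun i => ⟨hPW, hPQ0 ▸ hQ0VQ⟩, fun i => one_pos,
      linearIndependent_unique_iff.mpr one_ne_zero, by simp, fun i => by simpa using hδ⟩
  · haveI : Nonempty (Fin d) := ⟨⟨0, hdpos⟩⟩
    have hdR : (0:ℝ) < d := by exact_mod_cast hdpos
    have hdQ : (d:ℚ) ≠ 0 := by exact_mod_cast hdpos.ne'
    set B : ℝ := ∑ j, ‖v j‖ with hB
    have hB0 : 0 ≤ B := Finset.sum_nonneg fun j _ => norm_nonneg _
    set C : ℝ := ((d:ℝ) + 1) * B + 1 with hC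
    have hC1 : 1 ≤ C := by nlinarith
    obtain ⟨N, hN⟩ := exists_nat_gt (C / δ)
    have hCδ : 0 < C / δ := div_pos (by linarith) hδ
    have hN0 : (0:ℝ) < N := lt_trans hCδ hN
    have hNne : (N:ℝ) ≠ 0 := hN0.ne'
    have hNQ : (N:ℚ) ≠ 0 := by exact_mod_cast (by exact_mod_cast hN0.ne' : (N:ℕ) ≠ 0)
    have hCN : C / N < δ := by
      rw [div_lt_iff₀ hN0]
      rw [div_lt_iff₀ hδ] at hN
      linarith
    set m : Fin d → ℤ := fun j => ⌊(N:ℝ) * t j⌋ with hm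
    set θ : Fin d → ℝ := fun j => Int.fract ((N:ℝ) * t j) with hθ
    have hθdef : ∀ j, θ j = (N:ℝ) * t j - m j := fun j => rfl
    have hθpos : ∀ j, 0 < θ j := by
      intro j
      rw [hθ]
      rw [Int.fract_pos]
      intro hcon
      refine hirr j ((m j : ℚ) / (N : ℚ)) ?_
      push_cast
      rw [eq_div_iff hNne, mul_comm]
      exact hcon
    have hθlt : ∀ j, θ j < 1 := fun j => Int.fract_lt_one _
    set P0 : V := Q0 + ∑ j, ((m j : ℝ) / N) • v j with hP0
    set Pts : Fin (d+1) → V := Fin.cons P0 (fun j => P0 + ((d : ℝ)/N) • v j) with hPts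
    set r : Fin (d+1) → ℝ := Fin.cons (1 - ∑ j, θ j / d) (fun j => θ j / d) with hr
    have hPform : P = P0 + ∑ j, (θ j / N) • v j := by
      rw [hP0, hPt, add_assoc, ← Finset.sum_add_distrib]
      congr 1
      refine Finset.sum_congr rfl (fun j _ => ?_)
      rw [← add_smul]
      congr 1
      rw [hθdef j]
      field_simp
      ring
    have hsumdir : ∀ (c : Fin d → ℝ), (∑ j, c j • v j) ∈ W.direction :=
      fun c => Submodule.sum_mem _ (fun j _ => Submodule.smul_mem _ _ (hvdir j))
    have hmemW : ∀ i, Pts i ∈ W := by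
      intro i
      induction i using Fin.cases with
      | zero =>
        rw [hPts, Fin.cons_zero, hP0]
        have := AffineSubspace.vadd_mem_of_mem_direction
          (hsumdir (fun j => (m j : ℝ)/N)) hQ0W
        rwa [vadd_eq_add, add_comm] at this
      | succ j =>
        rw [hPts, Fin.cons_succ, hP0]
        have hd2 : (∑ j', ((m j' : ℝ)/N) • v j') + ((d:ℝ)/N) • v j ∈ W.direction :=
          Submodule.add_mem _ (hsumdir _) (Submodule.smul_mem _ _ (hvdir j))
        have h3 := AffineSubspace.vadd_mem_of_mem_direction hd2 hQ0W
        rw [vadd_eq_add] at h3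
        have heq : Q0 + ∑ j', ((m j' : ℝ)/N) • v j' + ((d:ℝ)/N) • v j
            = ((∑ j', ((m j' : ℝ)/N) • v j') + ((d:ℝ)/N) • v j) + Q0 := by abel
        rw [heq]
        exact h3
    have hmemVQ : ∀ i, Pts i ∈ VQ := by
      have hsumVQ : (∑ j, ((m j : ℝ)/N) • v j) ∈ VQ := by
        refine Submodule.sum_mem _ (fun j _ => ?_)
        have hcast : ((m j : ℝ)/N) = (((m j : ℚ)/(N : ℚ) : ℚ) : ℝ) := by push_cast; ring
        rw [hcast, qsmul_eq]
        exact VQ.smul_mem _ (hvVQ j)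
      intro i
      induction i using Fin.cases with
      | zero =>
        rw [hPts, Fin.cons_zero, hP0]
        exact VQ.add_mem hQ0VQ hsumVQ
      | succ j =>
        rw [hPts, Fin.cons_succ, hP0]
        refine VQ.add_mem (VQ.add_mem hQ0VQ hsumVQ) ?_
        have hcast : ((d:ℝ)/N) = (((d : ℚ)/(N : ℚ) : ℚ) : ℝ) := by push_cast; ring
        rw [hcast, qsmul_eq]
        exact VQ.smul_mem _ (hvVQ j)
    have hrpos : ∀ i, 0 < r i := by
      intro i
      induction i using Fin.cases with
      | zero =>
        rw [hr, Fin.cons_zero]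
        have h1 : ∑ j, θ j / d < ∑ j, 1 / (d:ℝ) :=
          Finset.sum_lt_sum_of_nonempty Finset.univ_nonempty
            (fun j _ => by rw [div_lt_div_iff₀ hdR hdR]; nlinarith [hθlt j])
        have h2 : ∑ _j : Fin d, (1:ℝ) / (d:ℝ) = 1 := by
          rw [Finset.sum_const, Finset.card_univ, Fintype.card_fin, nsmul_eq_mul]
          field_simp
        rw [h2] at h1
        linarith
      | succ j =>
        rw [hr, Fin.cons_succ]
        exact div_pos (hθpos j) hdR
    have hkey : P = ∑ i, r i • Pts i := by
      rw [Fin.sum_univ_succ]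
      simp only [hr, hPts, Fin.cons_zero, Fin.cons_succ]
      have hexp : ∀ j, (θ j / d) • (P0 + ((d:ℝ)/N) • v j)
          = (θ j / d) • P0 + (θ j / N) • v j := by
        intro j
        rw [smul_add, smul_smul]
        congr 2
        field_simp
      rw [Finset.sum_congr rfl (fun j _ => hexp j), Finset.sum_add_distrib, sub_smul,
        one_smul, ← Finset.sum_smul, hPform]
      abel
    have hrli : LinearIndependent ℚ r := by
      rw [Fintype.linearIndependent_iff]
      intro g hg
      rw [Fin.sum_univ_succ] at hg
      simp only [hr, Fin.cons_zero, Fin.cons_succ, Rat.smul_def] at hg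
      -- hg : (g 0:ℝ) * (1 - ∑ θ/d) + ∑ j, (g j.succ:ℝ) * (θ j / d) = 0
      set a : Fin d → ℚ := fun j => (g j.succ - g 0) * N / d with ha
      set a0 : ℚ := -(g 0) + ∑ j, (g j.succ - g 0) * (m j : ℚ) / d with ha0
      have e2 : ∑ j, ((g j.succ : ℝ) - (g 0 : ℝ)) * θ j / d = -(g 0 : ℝ) := by
        have e1 : ∑ j, ((g j.succ : ℝ) - (g 0 : ℝ)) * θ j / d
            = ∑ j, (g j.succ : ℝ) * (θ j / d) - (g 0 : ℝ) * ∑ j, θ j / d := by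
          rw [Finset.mul_sum, ← Finset.sum_sub_distrib]
          exact Finset.sum_congr rfl (fun j _ => by ring)
        rw [e1]
        linear_combination hg
      have E : ∑ j, (a j : ℝ) * t j = (a0 : ℝ) := by
        have hterm : ∀ j, (a j : ℝ) * t j
            = ((g j.succ : ℝ) - (g 0 : ℝ)) * θ j / d
              + ((g j.succ : ℝ) - (g 0 : ℝ)) * (m j : ℝ) / d := by
          intro j
          rw [ha]
          push_cast
          rw [hθdef j]
          field_simp
          ring
        rw [Finset.sum_congr rfl (fun j _ => hterm j), Finset.sum_add_distrib, e2, ha0]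
        push_cast
        ring
      have hgz := claimA a a0 E
      have hgs : ∀ j : Fin d, g j.succ = g 0 := by
        intro j
        have h5 := congrFun hgz j
        simp only [ha, Pi.zero_apply] at h5
        have h6 : (g j.succ - g 0) * (N:ℚ) / (d:ℚ) = 0 := h5
        rw [div_eq_zero_iff] at h6
        rcases h6 with h6 | h6
        · rcases mul_eq_zero.mp h6 with h7 | h7
          · linarith
          · exact absurd h7 hNQ
        · exact absurd h6 hdQ
      have hg0 : g 0 = 0 := by
        have hr2 : ∑ j, (g j.succ : ℝ) * (θ j / d) = (g 0 : ℝ) * ∑ j, θ j / d := by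
          rw [Finset.mul_sum]
          exact Finset.sum_congr rfl (fun j _ => by rw [hgs j])
        rw [hr2] at hg
        have : (g 0 : ℝ) = 0 := by linear_combination hg
        exact_mod_cast this
      intro i
      induction i using Fin.cases with
      | zero => exact hg0
      | succ j => rw [hgs j, hg0]
    have hnorm0 : ‖∑ j, (θ j / N) • v j‖ ≤ B / N := by
      refine le_trans (norm_sum_le _ _) ?_
      rw [hB, Finset.sum_div]
      refine Finset.sum_le_sum fun j _ => ?_
      rw [norm_smul, Real.norm_eq_abs, abs_of_pos (div_pos (hθpos j) hN0)]
      have h1 : θ j / N ≤ 1 / N := by gcongr; exact (hθlt j).le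
      calc θ j / ↑N * ‖v j‖ ≤ 1 / ↑N * ‖v j‖ := mul_le_mul_of_nonneg_right h1 (norm_nonneg _)
        _ = ‖v j‖ / ↑N := by ring
    have hvB : ∀ j, ‖v j‖ ≤ B := by
      intro j
      rw [hB]
      exact Finset.single_le_sum (fun j' _ => norm_nonneg (v j')) (Finset.mem_univ j)
    have hbound : ∀ i, ‖P - Pts i‖ < δ := by
      have hCN' := hCN
      rw [div_lt_iff₀ hN0, hC] at hCN'
      have hfinal : ((d:ℝ) + 1) * B / N < δ := by
        rw [div_lt_iff₀ hN0]
        linarith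
      intro i
      induction i using Fin.cases with
      | zero =>
        have heq : P - Pts 0 = ∑ j, (θ j / N) • v j := by
          rw [hPts, Fin.cons_zero, hPform]; abel
        rw [heq]
        refine lt_of_le_of_lt (le_trans hnorm0 ?_) hfinal
        gcongr
        exact le_mul_of_one_le_left hB0 (by linarith)
      | succ j =>
        have heq : P - Pts j.succ = (∑ j', (θ j' / N) • v j') - ((d:ℝ)/N) • v j := by
          rw [hPts, Fin.cons_succ, hPform]; abel
        rw [heq]
        refine lt_of_le_of_lt (le_trans (norm_sub_le _ _) ?_) hfinal
        have h8 : ‖((d:ℝ)/N) • v j‖ = (d:ℝ)/N * ‖v j‖ := by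
          rw [norm_smul, Real.norm_eq_abs, abs_of_pos (div_pos hdR hN0)]
        rw [h8]
        refine le_trans (add_le_add hnorm0
          (mul_le_mul_of_nonneg_left (hvB j) (le_of_lt (div_pos hdR hN0)))) ?_
        apply le_of_eq
        ring
    exact ⟨d + 1, Pts, r, fun i => ⟨hmemW i, hmemVQ i⟩, hrpos, hrli, hkey, hbound⟩
end

section
/- Let D = P + N be a Fujita–Zariski decomposition of an ℝ-Cartier divisor D on a normal projective variety X, and let G be an ℝ-Cartier divisor with Supp G ⊆ Supp N and N + G ≥ 0. Then D + G = P + (N+G) is a Fujita–Zariski decomposition of D + G with positive part P. -/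
/-- Abstract setup for Fujita–Zariski decompositions: ℝ-divisors on `X` are finitely
supported real functions on the set `X` of prime divisors; `M` indexes birational models
`W m → X`, each with its group of ℝ-divisors, a nef cone, and a linear pullback map.
`D = P + N` is a Fujita–Zariski decomposition if `P` is nef, `N ≥ 0`, and for every model
and every decomposition `f*D = P' + N'` with `P'` nef, `N' ≥ 0`, one has `P' ≤ f*P`. -/
def IsFujitaZariski {X M : Type} {W : M → Type}
    (NefX : Set (X →₀ ℝ)) (Nef : ∀ m, Set (W m →₀ ℝ))
    (pull : ∀ m, (X →₀ ℝ) →ₗ[ℝ] (W m →₀ ℝ))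
    (D P N : X →₀ ℝ) : Prop :=
  P ∈ NefX ∧ 0 ≤ N ∧ D = P + N ∧
    ∀ m, ∀ P' N' : W m →₀ ℝ, P' ∈ Nef m → 0 ≤ N' →
      pull m D = P' + N' → P' ≤ pull m P

/-- Lemma 6.1: if `D = P + N` is a Fujita–Zariski decomposition,
`Supp G ⊆ Supp N` and `N + G ≥ 0`, then `D + G = P + (N + G)` is a Fujita–Zariski
decomposition with positive part `P`. -/
theorem stmt10 {X M : Type} {W : M → Type}
    (NefX : Set (X →₀ ℝ)) (Nef : ∀ m, Set (W m →₀ ℝ))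
    (pull : ∀ m, (X →₀ ℝ) →ₗ[ℝ] (W m →₀ ℝ))
    (hNefAdd : ∀ m, ∀ x ∈ Nef m, ∀ y ∈ Nef m, x + y ∈ Nef m)
    (hNefSmul : ∀ m, ∀ x ∈ Nef m, ∀ c : ℝ, 0 < c → c • x ∈ Nef m)
    (hpullNef : ∀ m, ∀ x ∈ NefX, pull m x ∈ Nef m)
    (hpullEff : ∀ m, ∀ x : X →₀ ℝ, 0 ≤ x → 0 ≤ pull m x)
    (D P N G : X →₀ ℝ)
    (hFZ : IsFujitaZariski NefX Nef pull D P N)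
    (hsupp : G.support ⊆ N.support)
    (hNG : 0 ≤ N + G) :
    IsFujitaZariski NefX Nef pull (D + G) P (N + G) := by
  obtain ⟨hPnef, hN, hD, hmax⟩ := hFZ
  have hNx : ∀ x, 0 ≤ N x := fun x => by
    have := Finsupp.le_def.mp hN x; simpa using this
  -- choose c > 0 with G ≤ c • N
  set c : ℝ := (∑ x ∈ G.support, max (G x / N x) 0) + 1 with hc
  have hsum_nonneg : 0 ≤ ∑ x ∈ G.support, max (G x / N x) 0 :=
    Finset.sum_nonneg fun x _ => le_max_right _ _
  have hcpos : 0 < c := by positivity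
  have hGc : ∀ x, G x ≤ c * N x := by
    intro x
    by_cases hx : x ∈ G.support
    · have hNxpos : 0 < N x := by
        have := hsupp hx
        have hne : N x ≠ 0 := Finsupp.mem_support_iff.mp this
        exact lt_of_le_of_ne (hNx x) (Ne.symm hne)
      have h1 : G x / N x ≤ c := by
        have : max (G x / N x) 0 ≤ ∑ y ∈ G.support, max (G y / N y) 0 :=
          Finset.single_le_sum (f := fun y => max (G y / N y) 0)
            (fun y _ => le_max_right _ _) hx
        have := le_trans (le_max_left _ _) this
        linarith
      calc G x = (G x / N x) * N x := by field_simp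
        _ ≤ c * N x := mul_le_mul_of_nonneg_right h1 (hNx x)
    · have hGx : G x = 0 := Finsupp.notMem_support_iff.mp hx
      have : 0 ≤ c * N x := mul_nonneg hcpos.le (hNx x)
      linarith
  have hLpos : (0 : X →₀ ℝ) ≤ c • N - G := by
    rw [Finsupp.le_def]; intro x
    simp only [Finsupp.coe_zero, Pi.zero_apply, Finsupp.coe_sub, Pi.sub_apply,
      Finsupp.coe_smul, Pi.smul_apply, smul_eq_mul]
    linarith [hGc x]
  refine ⟨hPnef, hNG, by rw [hD]; abel, ?_⟩
  intro m P' N' hP' hN' hdec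
  set a : ℝ := 1 + c with ha
  have hapos : 0 < a := by positivity
  set P'' : W m →₀ ℝ := P' + c • pull m P with hP''
  set N'' : W m →₀ ℝ := N' + pull m (c • N - G) with hN''
  have key : pull m D = (1 / a) • P'' + (1 / a) • N'' := by
    have h1 : a • pull m D = P'' + N'' := by
      have hD2 : a • D = (D + G) + (c • P + (c • N - G)) := by
        rw [hD]; rw [ha]; module
      calc a • pull m D = pull m (a • D) := by rw [map_smul]
        _ = pull m (D + G) + (c • pull m P + pull m (c • N - G)) := by
            rw [hD2]; simp [map_add, map_smul]
        _ = (P' + N') + (c • pull m P + pull m (c • N - G)) := by rw [hdec]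
        _ = P'' + N'' := by rw [hP'', hN'']; abel
    have := congrArg (fun v => (1 / a) • v) h1
    simp only [smul_smul, one_div, inv_mul_cancel₀ hapos.ne', one_smul, smul_add] at this
    rw [this]; simp [one_div]
  have hP''nef : (1 / a) • P'' ∈ Nef m :=
    hNefSmul m P'' (hNefAdd m P' hP' (c • pull m P)
      (hNefSmul m (pull m P) (hpullNef m P hPnef) c hcpos)) (1 / a) (by positivity)
  have hN''pos : (0 : W m →₀ ℝ) ≤ (1 / a) • N'' := by
    have h1 : (0 : W m →₀ ℝ) ≤ N'' := by
      rw [hN'']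
      have := hpullEff m _ hLpos
      exact add_nonneg hN' this
    rw [Finsupp.le_def]; intro x
    have := Finsupp.le_def.mp h1 x
    simp only [Finsupp.coe_zero, Pi.zero_apply, Finsupp.coe_smul, Pi.smul_apply,
      smul_eq_mul] at *
    positivity
  have hfin := hmax m _ _ hP''nef hN''pos key
  rw [Finsupp.le_def]; intro x
  have h2 := Finsupp.le_def.mp hfin x
  simp only [Finsupp.coe_smul, Pi.smul_apply, smul_eq_mul, hP'', Finsupp.coe_add,
    Pi.add_apply] at h2
  have h3 : P' x + c * (pull m P) x ≤ a * (pull m P) x := by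
    have := mul_le_mul_of_nonneg_left h2 hapos.le
    rw [← mul_assoc, mul_one_div, div_self hapos.ne', one_mul] at this
    linarith
  rw [ha] at h3; linarith
end
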